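/- arXiv:1002.2174 — 3 statements merged into one kernel-verified Lean document; each statement's English description precedes it below -/
import Mathlib

section
/- Let R > 0, let k_f : [0,R]×[0,R] → ℝ be continuous and symmetric (k_f(x,y) = k_f(y,x)), and let u : [0,R] → ℝ be continuous. Then ∫_0^R x · Q^R_f(u)(x) dx = 0, i.e. the truncated fragmentation operator (in which polymers of size greater than R cannot split) exactly conserves the total mass on [0,R]. -/
open MeasureTheory

/-- The truncated fragmentation operator
`Q^R_f(u)(x) = (1/2) u(x) ∫_0^x k_f(y,x−y) dy − ∫_x^R k_f(x,y−x) u(y) dy`. -/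
noncomputable def QfR (R : ℝ) (kf : ℝ → ℝ → ℝ) (u : ℝ → ℝ) (x : ℝ) : ℝ :=
  (1 / 2) * u x * (∫ y in (0:ℝ)..x, kf y (x - y))
    - ∫ y in x..R, kf x (y - x) * u y

open Set

/-- Fubini for a continuous function on the triangle `{0 ≤ x ≤ y ≤ R}`. -/
lemma fubini_triangle_aux (R : ℝ) (hR : 0 ≤ R) (g : ℝ × ℝ → ℝ) (hg : Continuous g) :
    ∫ x in (0:ℝ)..R, ∫ y in x..R, g (x, y) = ∫ y in (0:ℝ)..R, ∫ x in (0:ℝ)..y, g (x, y) := by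
  set f : ℝ → ℝ → ℝ := fun x y => if x ≤ y then g (x, y) else 0 with hf
  have hT : MeasurableSet {p : ℝ × ℝ | p.1 ≤ p.2} :=
    (isClosed_le continuous_fst continuous_snd).measurableSet
  have huncurry : Function.uncurry f = Set.indicator {p : ℝ × ℝ | p.1 ≤ p.2} g := by
    ext p
    simp [Function.uncurry, hf, Set.indicator, Set.mem_setOf_eq]
  have hint : Integrable (Function.uncurry f)
      ((volume.restrict (Ioc (0:ℝ) R)).prod (volume.restrict (Ioc (0:ℝ) R))) := by
    rw [Measure.prod_restrict, ← Measure.volume_eq_prod, huncurry]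
    have h1 : IntegrableOn g (Ioc (0:ℝ) R ×ˢ Ioc (0:ℝ) R) volume :=
      ((hg.continuousOn).integrableOn_compact (isCompact_Icc.prod isCompact_Icc)).mono_set
        (Set.prod_mono Ioc_subset_Icc_self Ioc_subset_Icc_self)
    exact h1.indicator hT
  have hslice₁ : ∀ x : ℝ, ∀ s : Set ℝ, s ⊆ Icc 0 R → IntegrableOn (f x) s volume := by
    intro x s hsub
    have he : f x = Set.indicator (Ici x) (fun y => g (x, y)) := by
      ext y; simp [hf, Set.indicator, Set.mem_Ici]
    rw [he]
    exact (((hg.comp (Continuous.prodMk_right x)).continuousOn.integrableOn_Icc).mono_set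
      hsub).indicator measurableSet_Ici
  have hslice₂ : ∀ y : ℝ, ∀ s : Set ℝ, s ⊆ Icc 0 R →
      IntegrableOn (fun x => f x y) s volume := by
    intro y s hsub
    have he : (fun x => f x y) = Set.indicator (Iic y) (fun x => g (x, y)) := by
      ext x; simp [hf, Set.indicator, Set.mem_Iic]
    rw [he]
    exact (((hg.comp (Continuous.prodMk_left y)).continuousOn.integrableOn_Icc).mono_set
      hsub).indicator measurableSet_Iic
  have hL : ∫ x in (0:ℝ)..R, ∫ y in x..R, g (x, y)
      = ∫ x in Ioc (0:ℝ) R, ∫ y in Ioc (0:ℝ) R, f x y := by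
    rw [intervalIntegral.integral_of_le hR]
    refine setIntegral_congr_fun measurableSet_Ioc (fun x hx => ?_)
    have hx0 : (0:ℝ) ≤ x := le_of_lt hx.1
    have hsplit : Ioc (0:ℝ) R = Ioc 0 x ∪ Ioc x R := (Ioc_union_Ioc_eq_Ioc hx0 hx.2).symm
    rw [hsplit, setIntegral_union (Ioc_disjoint_Ioc_of_le le_rfl) measurableSet_Ioc
      (hslice₁ x _ (Ioc_subset_Icc_self.trans (Icc_subset_Icc le_rfl hx.2)))
      (hslice₁ x _ (Ioc_subset_Icc_self.trans (Icc_subset_Icc hx0 le_rfl)))]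
    have h0 : ∫ y in Ioc (0:ℝ) x, f x y = 0 := by
      rw [integral_Ioc_eq_integral_Ioo]
      rw [setIntegral_congr_fun measurableSet_Ioo (g := fun _ => (0:ℝ))
        (fun y hy => by simp [hf, not_le.mpr hy.2])]
      simp
    have h1 : ∫ y in Ioc x R, f x y = ∫ y in Ioc x R, g (x, y) :=
      setIntegral_congr_fun measurableSet_Ioc (fun y hy => by simp [hf, le_of_lt hy.1])
    rw [h0, h1, zero_add, intervalIntegral.integral_of_le hx.2]
  have hRh : ∫ y in (0:ℝ)..R, ∫ x in (0:ℝ)..y, g (x, y)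
      = ∫ y in Ioc (0:ℝ) R, ∫ x in Ioc (0:ℝ) R, f x y := by
    rw [intervalIntegral.integral_of_le hR]
    refine setIntegral_congr_fun measurableSet_Ioc (fun y hy => ?_)
    have hy0 : (0:ℝ) ≤ y := le_of_lt hy.1
    have hsplit : Ioc (0:ℝ) R = Ioc 0 y ∪ Ioc y R := (Ioc_union_Ioc_eq_Ioc hy0 hy.2).symm
    rw [hsplit, setIntegral_union (Ioc_disjoint_Ioc_of_le le_rfl) measurableSet_Ioc
      (hslice₂ y _ (Ioc_subset_Icc_self.trans (Icc_subset_Icc le_rfl hy.2)))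
      (hslice₂ y _ (Ioc_subset_Icc_self.trans (Icc_subset_Icc hy0 le_rfl)))]
    have h0 : ∫ x in Ioc y R, f x y = 0 := by
      rw [setIntegral_congr_fun measurableSet_Ioc (g := fun _ => (0:ℝ))
        (fun x hx => by simp [hf, not_le.mpr hx.1])]
      simp
    have h1 : ∫ x in Ioc (0:ℝ) y, f x y = ∫ x in Ioc (0:ℝ) y, g (x, y) :=
      setIntegral_congr_fun measurableSet_Ioc (fun x hx => by simp [hf, hx.2])
    rw [h0, h1, add_zero, intervalIntegral.integral_of_le hy0]
  rw [hL, hRh]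
  exact integral_integral_swap hint

/-- Tietze extension, `ContinuousOn` version. -/
lemma exists_ext_aux {X : Type*} [TopologicalSpace X] [NormalSpace X] {s : Set X}
    (hs : IsClosed s) {f : X → ℝ} (hf : ContinuousOn f s) :
    ∃ g : X → ℝ, Continuous g ∧ ∀ x ∈ s, g x = f x := by
  obtain ⟨g, hg⟩ := ContinuousMap.exists_restrict_eq hs ⟨s.restrict f, hf.restrict⟩
  refine ⟨g, g.continuous, fun x hx => ?_⟩
  have := DFunLike.congr_fun hg (⟨x, hx⟩ : s)
  simpa [Set.restrict] using this

/-- Mass conservation for globally continuous data. -/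
theorem mass_conservation_aux (R : ℝ) (hR : 0 < R) (K : ℝ → ℝ → ℝ) (U : ℝ → ℝ)
    (hK : Continuous fun p : ℝ × ℝ => K p.1 p.2)
    (hsym : ∀ x ∈ Icc (0:ℝ) R, ∀ y ∈ Icc (0:ℝ) R, K x y = K y x)
    (hU : Continuous U) :
    ∫ x in (0:ℝ)..R, x * QfR R K U x = 0 := by
  have hR' : (0:ℝ) ≤ R := hR.le
  -- Step 1: pointwise identity on [0, R]
  have step1 : ∀ x ∈ Icc (0:ℝ) R,
      x * QfR R K U x
        = U x * (∫ y in (0:ℝ)..x, y * K y (x - y))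
          - ∫ y in x..R, (x * K x (y - x)) * U y := by
    intro x hx
    have hx0 := hx.1
    have refl1 : (∫ y in (0:ℝ)..x, (x - y) * K (x - y) y)
        = ∫ y in (0:ℝ)..x, y * K y (x - y) := by
      have := intervalIntegral.integral_comp_sub_left (a := (0:ℝ)) (b := x)
        (fun y => y * K y (x - y)) x
      simpa using this
    have refl2 : (∫ y in (0:ℝ)..x, (x - y) * K (x - y) y)
        = ∫ y in (0:ℝ)..x, (x - y) * K y (x - y) := by
      refine intervalIntegral.integral_congr (fun y hy => ?_)
      rw [uIcc_of_le hx0] at hy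
      have h1 : y ∈ Icc (0:ℝ) R := ⟨hy.1, hy.2.trans hx.2⟩
      have h2 : x - y ∈ Icc (0:ℝ) R := ⟨by linarith [hy.2], by linarith [hy.1, hx.2]⟩
      rw [hsym _ h2 _ h1]
    have int1 : IntervalIntegrable (fun y => y * K y (x - y)) volume 0 x :=
      (continuous_id.mul (hK.comp
        (by fun_prop : Continuous fun y : ℝ => ((y, x - y) : ℝ × ℝ)))).intervalIntegrable 0 x
    have int2 : IntervalIntegrable (fun y => (x - y) * K y (x - y)) volume 0 x :=
      ((continuous_const.sub continuous_id).mul (hK.comp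
        (by fun_prop : Continuous fun y : ℝ => ((y, x - y) : ℝ × ℝ)))).intervalIntegrable 0 x
    have key : x * (∫ y in (0:ℝ)..x, K y (x - y))
        = 2 * ∫ y in (0:ℝ)..x, y * K y (x - y) := by
      have : (∫ y in (0:ℝ)..x, x * K y (x - y))
          = (∫ y in (0:ℝ)..x, (x - y) * K y (x - y)) + ∫ y in (0:ℝ)..x, y * K y (x - y) := by
        rw [← intervalIntegral.integral_add int2 int1]
        refine intervalIntegral.integral_congr (fun y hy => ?_)
        ring
      rw [intervalIntegral.integral_const_mul] at this
      rw [this, ← refl2, refl1]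
      ring
    have hsecond : x * (∫ y in x..R, K x (y - x) * U y)
        = ∫ y in x..R, (x * K x (y - x)) * U y := by
      rw [← intervalIntegral.integral_const_mul]
      refine intervalIntegral.integral_congr (fun y hy => ?_)
      ring
    rw [QfR]
    rw [mul_sub, hsecond.symm]
    have : x * ((1/2) * U x * ∫ y in (0:ℝ)..x, K y (x - y))
        = (1/2) * U x * (x * ∫ y in (0:ℝ)..x, K y (x - y)) := by ring
    rw [this, key]
    ring
  -- continuity of the two pieces
  have c1 : Continuous fun x : ℝ => U x * ∫ y in (0:ℝ)..x, y * K y (x - y) := by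
    refine hU.mul ?_
    exact intervalIntegral.continuous_parametric_intervalIntegral_of_continuous
      (f := fun x y => y * K y (x - y)) (by fun_prop) continuous_id
  have hB : ∀ x : ℝ, (∫ y in x..R, (x * K x (y - x)) * U y)
      = (∫ y in (0:ℝ)..R, (x * K x (y - x)) * U y)
        - ∫ y in (0:ℝ)..x, (x * K x (y - x)) * U y := by
    intro x
    rw [eq_sub_iff_add_eq, add_comm, intervalIntegral.integral_add_adjacent_intervals]
    · exact (by fun_prop : Continuous fun y => (x * K x (y - x)) * U y).intervalIntegrable 0 x
    · exact (by fun_prop : Continuous fun y => (x * K x (y - x)) * U y).intervalIntegrable x R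
  have c2 : Continuous fun x : ℝ => ∫ y in x..R, (x * K x (y - x)) * U y := by
    have e : (fun x : ℝ => ∫ y in x..R, (x * K x (y - x)) * U y)
        = fun x : ℝ => (∫ y in (0:ℝ)..R, (x * K x (y - x)) * U y)
            - ∫ y in (0:ℝ)..x, (x * K x (y - x)) * U y := funext hB
    rw [e]
    refine Continuous.sub ?_ ?_
    · exact intervalIntegral.continuous_parametric_intervalIntegral_of_continuous'
        (f := fun x y => (x * K x (y - x)) * U y) (by fun_prop) 0 R
    · exact intervalIntegral.continuous_parametric_intervalIntegral_of_continuous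
        (f := fun x y => (x * K x (y - x)) * U y) (by fun_prop) continuous_id
  -- assemble
  have congr1 : ∫ x in (0:ℝ)..R, x * QfR R K U x
      = ∫ x in (0:ℝ)..R, ((U x * ∫ y in (0:ℝ)..x, y * K y (x - y))
          - ∫ y in x..R, (x * K x (y - x)) * U y) := by
    refine intervalIntegral.integral_congr (fun x hx => ?_)
    rw [uIcc_of_le hR'] at hx
    exact step1 x hx
  rw [congr1,
    intervalIntegral.integral_sub (c1.intervalIntegrable 0 R) (c2.intervalIntegrable 0 R)]
  have fub : ∫ x in (0:ℝ)..R, ∫ y in x..R, (x * K x (y - x)) * U y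
      = ∫ y in (0:ℝ)..R, ∫ x in (0:ℝ)..y, (x * K x (y - x)) * U y :=
    fubini_triangle_aux R hR' (fun p => (p.1 * K p.1 (p.2 - p.1)) * U p.2) (by fun_prop)
  rw [fub, sub_eq_zero]
  refine intervalIntegral.integral_congr (fun x hx => ?_)
  rw [intervalIntegral.integral_mul_const]
  ring

/-- the truncated fragmentation operator exactly conserves the total mass
on `[0,R]`. -/
theorem truncated_fragmentation_mass_conservation
    (R : ℝ) (hR : 0 < R) (kf : ℝ → ℝ → ℝ) (u : ℝ → ℝ)
    (hkf_cont : ContinuousOn (fun p : ℝ × ℝ => kf p.1 p.2) (Set.Icc 0 R ×ˢ Set.Icc 0 R))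
    (hkf_symm : ∀ x ∈ Set.Icc (0:ℝ) R, ∀ y ∈ Set.Icc (0:ℝ) R, kf x y = kf y x)
    (hu_cont : ContinuousOn u (Set.Icc 0 R)) :
    ∫ x in (0:ℝ)..R, x * QfR R kf u x = 0 := by
  have hR' : (0:ℝ) ≤ R := hR.le
  obtain ⟨K, hKc, hKeq⟩ := exists_ext_aux (isClosed_Icc.prod isClosed_Icc) hkf_cont
  obtain ⟨U, hUc, hUeq⟩ := exists_ext_aux isClosed_Icc hu_cont
  set K2 : ℝ → ℝ → ℝ := fun a b => K (a, b) with hK2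
  have hK2eq : ∀ a ∈ Icc (0:ℝ) R, ∀ b ∈ Icc (0:ℝ) R, K2 a b = kf a b := by
    intro a ha b hb
    exact hKeq (a, b) (Set.mk_mem_prod ha hb)
  have hsym : ∀ x ∈ Icc (0:ℝ) R, ∀ y ∈ Icc (0:ℝ) R, K2 x y = K2 y x := by
    intro x hx y hy
    rw [hK2eq x hx y hy, hK2eq y hy x hx, hkf_symm x hx y hy]
  have hcongr : ∫ x in (0:ℝ)..R, x * QfR R kf u x = ∫ x in (0:ℝ)..R, x * QfR R K2 U x := by
    refine intervalIntegral.integral_congr (fun x hx => ?_)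
    rw [uIcc_of_le hR'] at hx
    have hx0 := hx.1
    have hxR := hx.2
    have e1 : (∫ y in (0:ℝ)..x, kf y (x - y)) = ∫ y in (0:ℝ)..x, K2 y (x - y) := by
      refine intervalIntegral.integral_congr (fun y hy => ?_)
      rw [uIcc_of_le hx0] at hy
      have h1 : y ∈ Icc (0:ℝ) R := ⟨hy.1, hy.2.trans hxR⟩
      have h2 : x - y ∈ Icc (0:ℝ) R := ⟨by linarith [hy.2], by linarith [hy.1, hxR]⟩
      rw [hK2eq y h1 _ h2]
    have e2 : (∫ y in x..R, kf x (y - x) * u y) = ∫ y in x..R, K2 x (y - x) * U y := by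
      refine intervalIntegral.integral_congr (fun y hy => ?_)
      rw [uIcc_of_le hxR] at hy
      have hyI : y ∈ Icc (0:ℝ) R := ⟨hx0.trans hy.1, hy.2⟩
      have h2 : y - x ∈ Icc (0:ℝ) R := ⟨by linarith [hy.1], by linarith [hy.2, hx0]⟩
      rw [hK2eq x hx _ h2, hUeq y hyI]
    rw [QfR, QfR, e1, e2, hUeq x hx]
  rw [hcongr]
  exact mass_conservation_aux R hR K2 U (by simpa [hK2] using hKc) hsym hUc
end

section
/- For every real h > 0 and every real polynomial p of degree at most 3, ∫_0^h p(x) dx = h·( (55/24)·p(h) − (59/24)·p(2h) + (37/24)·p(3h) − (9/24)·p(4h) ). In particular, the boundary quadrature formula ∑'_{k=0}^{1} f_k = (55/24)f_1 − (59/24)f_2 + (37/24)f_3 − (9/24)f_4 used on the first cell (which avoids the boundary value f_0) is exact for cubic polynomials and hence fifth-order accurate. -/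
open MeasureTheory

/-- the boundary quadrature formula
`∑'_{k=0}^{1} f_k = (55/24)f_1 − (59/24)f_2 + (37/24)f_3 − (9/24)f_4`
(used on the first cell, avoiding the boundary value `f_0`) is exact for cubic
polynomials on a uniform grid of step `h`. -/
theorem boundary_quadrature_exact_for_cubics
    (h : ℝ) (hh : 0 < h) (p : Polynomial ℝ) (hp : p.degree ≤ 3) :
    ∫ x in (0:ℝ)..h, p.eval x
      = h * ((55 / 24) * p.eval h - (59 / 24) * p.eval (2 * h)
          + (37 / 24) * p.eval (3 * h) - (9 / 24) * p.eval (4 * h)) := by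
  have hnd : p.natDegree < 4 :=
    Nat.lt_succ_of_le (Polynomial.natDegree_le_iff_degree_le.mpr hp)
  have hev : ∀ x : ℝ, p.eval x = ∑ i ∈ Finset.range 4, p.coeff i * x ^ i := fun x =>
    Polynomial.eval_eq_sum_range' hnd x
  simp only [hev]
  rw [intervalIntegral.integral_finset_sum]
  · simp only [intervalIntegral.integral_const_mul, integral_pow]
    simp only [Finset.sum_range_succ, Finset.sum_range_zero]
    ring
  · intro i _
    exact (continuous_const.mul (continuous_pow i)).intervalIntegrable 0 h
end

section
/- Let h > 0 and let i < j be integers with j − i ≥ 7. Then for every real polynomial p of degree at most 3, setting x_k = k·h, one has ∫_{x_i}^{x_j} p(x) dx = h·[ (251/720)(p(x_i) + p(x_j)) + (299/240)(p(x_{i+1}) + p(x_{j−1})) + (211/240)(p(x_{i+2}) + p(x_{j−2})) + (739/720)(p(x_{i+3}) + p(x_{j−3})) + Σ_{k=i+4}^{j−4} p(x_k) ]. In other words, the fifth-order composite quadrature rule with endpoint weights 251/720, 299/240, 211/240, 739/720 and interior weight 1 is exact for cubic polynomials. -/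
open MeasureTheory

private lemma eval_cubic (p : Polynomial ℝ) (hp : p.degree ≤ 3) (x : ℝ) :
    p.eval x = p.coeff 0 + p.coeff 1 * x + p.coeff 2 * x ^ 2 + p.coeff 3 * x ^ 3 := by
  have hn : p.natDegree < 4 := Nat.lt_succ_of_le (Polynomial.natDegree_le_iff_degree_le.2 hp)
  rw [Polynomial.eval_eq_sum_range' hn]
  simp only [Finset.sum_range_succ, Finset.sum_range_zero]
  ring

private lemma integ_cubic (p : Polynomial ℝ) (hp : p.degree ≤ 3) (a b : ℝ) :
    ∫ x in a..b, p.eval x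
      = p.coeff 0 * (b - a) + p.coeff 1 * (b ^ 2 - a ^ 2) / 2
        + p.coeff 2 * (b ^ 3 - a ^ 3) / 3 + p.coeff 3 * (b ^ 4 - a ^ 4) / 4 := by
  set c0 := p.coeff 0; set c1 := p.coeff 1; set c2 := p.coeff 2; set c3 := p.coeff 3
  set q : Polynomial ℝ :=
    Polynomial.C c0 * Polynomial.X + Polynomial.C (c1 / 2) * Polynomial.X ^ 2
      + Polynomial.C (c2 / 3) * Polynomial.X ^ 3 + Polynomial.C (c3 / 4) * Polynomial.X ^ 4
    with hq
  have hderiv : ∀ x ∈ Set.uIcc a b, HasDerivAt (fun y => q.eval y) (p.eval x) x := by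
    intro x _
    have := q.hasDerivAt x
    refine this.congr_deriv ?_
    rw [eval_cubic p hp, hq]
    simp [Polynomial.derivative_pow]
    ring
  have hint : IntervalIntegrable (fun x => p.eval x) volume a b :=
    (p.continuous_aeval).intervalIntegrable a b
  rw [intervalIntegral.integral_eq_sub_of_hasDerivAt hderiv hint, hq]
  simp
  ring

/-- the fifth-order composite quadrature rule with endpoint weights
`251/720, 299/240, 211/240, 739/720` and interior weight `1` is exact for cubic
polynomials on a uniform grid `x_k = k·h` when `j − i ≥ 7`. -/
theorem composite_quadrature_exact_for_cubics
    (h : ℝ) (hh : 0 < h) (i j : ℤ) (hij : i < j) (hij7 : 7 ≤ j - i)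
    (p : Polynomial ℝ) (hp : p.degree ≤ 3) :
    ∫ x in ((i : ℝ) * h)..((j : ℝ) * h), p.eval x
      = h * ((251 / 720) * (p.eval ((i : ℝ) * h) + p.eval ((j : ℝ) * h))
          + (299 / 240) * (p.eval (((i : ℝ) + 1) * h) + p.eval (((j : ℝ) - 1) * h))
          + (211 / 240) * (p.eval (((i : ℝ) + 2) * h) + p.eval (((j : ℝ) - 2) * h))
          + (739 / 720) * (p.eval (((i : ℝ) + 3) * h) + p.eval (((j : ℝ) - 3) * h))
          + ∑ k ∈ Finset.Icc (i + 4) (j - 4), p.eval ((k : ℝ) * h)) := by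
  have hj7 : i + 7 ≤ j := by omega
  clear hij hij7
  obtain ⟨n, rfl⟩ := Int.le.dest hj7
  clear hj7
  induction n with
  | zero =>
      have hempty : Finset.Icc (i + 4) (i + 7 + (0 : ℕ) - 4) = ∅ := by
        apply Finset.Icc_eq_empty; omega
      rw [hempty, Finset.sum_empty, integ_cubic p hp]
      simp only [eval_cubic p hp]
      push_cast
      ring
  | succ n ih =>
      set j : ℤ := i + 7 + (n : ℤ) with hjdef
      have hstep : (i + 7 + ((n + 1 : ℕ) : ℤ)) = j + 1 := by push_cast [hjdef]; ring
      rw [hstep]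
      have hsplit : ∫ x in ((i : ℝ) * h)..(((j + 1 : ℤ) : ℝ) * h), p.eval x
          = (∫ x in ((i : ℝ) * h)..((j : ℝ) * h), p.eval x)
            + ∫ x in ((j : ℝ) * h)..(((j + 1 : ℤ) : ℝ) * h), p.eval x :=
        (intervalIntegral.integral_add_adjacent_intervals
          ((p.continuous_aeval).intervalIntegrable _ _)
          ((p.continuous_aeval).intervalIntegrable _ _)).symm
      have hsum : ∑ k ∈ Finset.Icc (i + 4) (j + 1 - 4), p.eval ((k : ℝ) * h)
          = (∑ k ∈ Finset.Icc (i + 4) (j - 4), p.eval ((k : ℝ) * h))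
            + p.eval (((j - 4 + 1 : ℤ) : ℝ) * h) := by
        have hins : Finset.Icc (i + 4) (j + 1 - 4)
            = insert (j - 4 + 1) (Finset.Icc (i + 4) (j - 4)) := by
          ext k
          simp only [Finset.mem_Icc, Finset.mem_insert]
          omega
        rw [hins, Finset.sum_insert (by simp only [Finset.mem_Icc]; omega), add_comm]
      rw [hsplit, hsum, ih, integ_cubic p hp]
      set S := ∑ k ∈ Finset.Icc (i + 4) (j - 4), p.eval ((k : ℝ) * h) with hS
      simp only [eval_cubic p hp]
      push_cast
      ring
end
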